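/- Let β > 0 and A an infinite block matrix with the stronger norm |A|_{β+} = sup_{s,s'} (1+||s|−|s'||)⟨s⟩^β⟨s'⟩^β ‖A_s^{s'}‖_∞ finite, and ζ with |ζ|_{β+} = sup_s |ζ_s|⟨s⟩^{β+1} finite. Then |Aζ|_{β+} ≤ C |A|_{β+} |ζ|_{β+}, where (Aζ)_s = ∑_k A_s^k ζ_k and C depends only on β. -/

import Mathlib

/-- Entrywise sup norm on `2×2` complex matrices. -/
noncomputable def mnorm (M : Matrix (Fin 2) (Fin 2) ℂ) : ℝ :=
  ⨆ i : Fin 2, ⨆ j : Fin 2, ‖M i j‖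

/-- Euclidean norm of a vector in `ℂ²`. -/
noncomputable def vnorm (v : Fin 2 → ℂ) : ℝ :=
  Real.sqrt (‖v 0‖ ^ 2 + ‖v 1‖ ^ 2)

lemma entry_le_mnorm (M : Matrix (Fin 2) (Fin 2) ℂ) (i j : Fin 2) :
    ‖M i j‖ ≤ mnorm M := by
  have h1 : ‖M i j‖ ≤ ⨆ j' : Fin 2, ‖M i j'‖ :=
    le_ciSup (f := fun j' : Fin 2 => ‖M i j'‖)
      (Set.Finite.bddAbove (Set.finite_range _)) j
  exact h1.trans (le_ciSup (f := fun i' : Fin 2 => ⨆ j' : Fin 2, ‖M i' j'‖)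
    (Set.Finite.bddAbove (Set.finite_range _)) i)

lemma mnorm_nonneg (M : Matrix (Fin 2) (Fin 2) ℂ) : 0 ≤ mnorm M :=
  le_trans (norm_nonneg _) (entry_le_mnorm M 0 0)

lemma vnorm_nonneg (v : Fin 2 → ℂ) : 0 ≤ vnorm v := Real.sqrt_nonneg _

lemma abs_le_vnorm (v : Fin 2 → ℂ) (i : Fin 2) : ‖v i‖ ≤ vnorm v := by
  have h0 := norm_nonneg (v 0)
  have h1 := norm_nonneg (v 1)
  fin_cases i
  · show ‖v 0‖ ≤ vnorm v
    calc ‖v 0‖ = Real.sqrt (‖v 0‖ ^ 2) :=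
          (Real.sqrt_sq h0).symm
      _ ≤ Real.sqrt (‖v 0‖ ^ 2 + ‖v 1‖ ^ 2) :=
          Real.sqrt_le_sqrt (by nlinarith)
  · show ‖v 1‖ ≤ vnorm v
    calc ‖v 1‖ = Real.sqrt (‖v 1‖ ^ 2) :=
          (Real.sqrt_sq h1).symm
      _ ≤ Real.sqrt (‖v 0‖ ^ 2 + ‖v 1‖ ^ 2) :=
          Real.sqrt_le_sqrt (by nlinarith)

lemma vnorm_mulVec_le (M : Matrix (Fin 2) (Fin 2) ℂ) (v : Fin 2 → ℂ) :
    vnorm (M.mulVec v) ≤ 2 * mnorm M * vnorm v := by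
  set m := mnorm M with hm
  have hmn := mnorm_nonneg M
  set n0 := ‖v 0‖
  set n1 := ‖v 1‖
  have hn0 : 0 ≤ n0 := norm_nonneg _
  have hn1 : 0 ≤ n1 := norm_nonneg _
  have hx : ∀ i : Fin 2, ‖M.mulVec v i‖ ≤ m * n0 + m * n1 := by
    intro i
    have : M.mulVec v i = M i 0 * v 0 + M i 1 * v 1 := by
      simp [Matrix.mulVec, dotProduct, Fin.sum_univ_two]
    rw [this]
    calc ‖M i 0 * v 0 + M i 1 * v 1‖
        ≤ ‖M i 0 * v 0‖ + ‖M i 1 * v 1‖ := norm_add_le _ _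
      _ = ‖M i 0‖ * n0 + ‖M i 1‖ * n1 := by rw [norm_mul, norm_mul]
      _ ≤ m * n0 + m * n1 := by
          gcongr <;> exact entry_le_mnorm M i _
  have hvn : vnorm v = Real.sqrt (n0 ^ 2 + n1 ^ 2) := rfl
  have hvn2 : vnorm v ^ 2 = n0 ^ 2 + n1 ^ 2 := by
    rw [hvn, Real.sq_sqrt (by positivity)]
  have hvnn : 0 ≤ vnorm v := vnorm_nonneg v
  have hkey : ‖M.mulVec v 0‖ ^ 2 + ‖M.mulVec v 1‖ ^ 2
      ≤ (2 * m * vnorm v) ^ 2 := by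
    have h0 := hx 0
    have h1 := hx 1
    have a0 := norm_nonneg (M.mulVec v 0)
    have a1 := norm_nonneg (M.mulVec v 1)
    have hs0 : ‖M.mulVec v 0‖ ^ 2 ≤ (m * n0 + m * n1) ^ 2 := by nlinarith
    have hs1 : ‖M.mulVec v 1‖ ^ 2 ≤ (m * n0 + m * n1) ^ 2 := by nlinarith
    have hmid : 2 * (m * n0 + m * n1) ^ 2 ≤ 4 * m ^ 2 * (n0 ^ 2 + n1 ^ 2) := by
      nlinarith [sq_nonneg (m * (n0 - n1))]
    have he : (2 * m * vnorm v) ^ 2 = 4 * m ^ 2 * (n0 ^ 2 + n1 ^ 2) := by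
      have : (2 * m * vnorm v) ^ 2 = 4 * m ^ 2 * (vnorm v ^ 2) := by ring
      rw [this, hvn2]
    rw [he]
    linarith
  calc vnorm (M.mulVec v) ≤ Real.sqrt ((2 * m * vnorm v) ^ 2) := Real.sqrt_le_sqrt hkey
    _ = 2 * m * vnorm v := Real.sqrt_sq (by positivity)

/-- The key scalar inequality. -/
lemma key_ineq (β : ℝ) (hβ : 0 < β) (a c d : ℝ) (ha : 1 ≤ a) (hc : 1 ≤ c) (hd : 0 ≤ d)
    (hacd : a ≤ c + d) :
    a / ((1 + d) * c ^ (1 + 2 * β)) ≤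
      2 / c ^ (1 + 2 * β) + 2 / (max d 1) ^ (1 + 2 * β) := by
  set r := 1 + 2 * β with hr
  set M := max d 1 with hM
  have hM1 : 1 ≤ M := le_max_right _ _
  have hMpos : (0:ℝ) < M := lt_of_lt_of_le one_pos hM1
  have hcpos : (0:ℝ) < c := lt_of_lt_of_le one_pos hc
  have hapos : (0:ℝ) < a := lt_of_lt_of_le one_pos ha
  have hDpos : (0:ℝ) < 1 + d := by linarith
  have hcr : (0:ℝ) < c ^ r := Real.rpow_pos_of_pos hcpos r
  have hMr : (0:ℝ) < M ^ r := Real.rpow_pos_of_pos hMpos r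
  rcases le_or_gt a (2 * (1 + d)) with hcase | hcase
  · have h1 : a / ((1 + d) * c ^ r) ≤ 2 / c ^ r := by
      rw [div_le_div_iff₀ (by positivity) hcr]
      calc a * c ^ r ≤ (2 * (1 + d)) * c ^ r := by gcongr
        _ = 2 * ((1 + d) * c ^ r) := by ring
    have h2 : (0:ℝ) ≤ 2 / M ^ r := by positivity
    linarith
  · -- a > 2(1+d): then c ≥ a - d ≥ a/2 and c ≥ M
    have hca : a / 2 ≤ c := by
      have : a - d ≤ c := by linarith
      linarith
    have hcM : M ≤ c := by
      have h1 : a - d ≤ c := by linarith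
      have h2 : d ≤ c := by linarith
      have h3 : (1:ℝ) ≤ c := hc
      exact max_le h2 h3
    have hDM : M ≤ 1 + d := by
      apply max_le <;> linarith
    have hsplit : c ^ r = c * c ^ (2 * β) := by
      rw [hr, Real.rpow_add hcpos, Real.rpow_one]
    have hMsplit : M ^ r = M * M ^ (2 * β) := by
      rw [hr, Real.rpow_add hMpos, Real.rpow_one]
    have hpow : M ^ (2 * β) ≤ c ^ (2 * β) :=
      Real.rpow_le_rpow hMpos.le hcM (by linarith)
    have hMc : (0:ℝ) < M ^ (2 * β) := Real.rpow_pos_of_pos hMpos _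
    have hden : M * (a / 2) * M ^ (2 * β) ≤ (1 + d) * c ^ r := by
      rw [hsplit]
      calc M * (a / 2) * M ^ (2 * β) ≤ (1 + d) * c * c ^ (2 * β) := by gcongr
        _ = (1 + d) * (c * c ^ (2 * β)) := by ring
    have h1 : a / ((1 + d) * c ^ r) ≤ a / (M * (a / 2) * M ^ (2 * β)) := by
      apply div_le_div_of_nonneg_left hapos.le (by positivity) hden
    have h2 : a / (M * (a / 2) * M ^ (2 * β)) = 2 / M ^ r := by
      rw [hMsplit]
      field_simp
    have h3 : (0:ℝ) ≤ 2 / c ^ r := by positivity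
    rw [h2] at h1
    linarith

/-- Lemma 3.1(4): if `|A|_{β+} ≤ nA` and `|ζ|_{β+} ≤ nζ`, then `Aζ` converges and
`|Aζ|_{β+} ≤ C nA nζ`, with `C` depending only on `β`. -/
theorem stmt_9 (β : ℝ) (hβ : 0 < β) :
    ∃ C > 0, ∀ (A : ℤ → ℤ → Matrix (Fin 2) (Fin 2) ℂ) (ζ : ℤ → Fin 2 → ℂ) (nA nζ : ℝ),
      (∀ s s' : ℤ,
        (1 + |(|(s : ℝ)| - |(s' : ℝ)|)|) * (max |(s : ℝ)| 1) ^ β * (max |(s' : ℝ)| 1) ^ β *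
            mnorm (A s s') ≤ nA) →
      (∀ s : ℤ, vnorm (ζ s) * (max |(s : ℝ)| 1) ^ (β + 1) ≤ nζ) →
      ∀ s : ℤ,
        Summable (fun k : ℤ => (A s k).mulVec (ζ k)) ∧
        vnorm (∑' k : ℤ, (A s k).mulVec (ζ k)) * (max |(s : ℝ)| 1) ^ (β + 1) ≤ C * nA * nζ := by
  set r := 1 + 2 * β with hr
  have hr1 : 1 < r := by simp [hr]; linarith
  -- the basic summable family
  set F : ℤ → ℝ := fun m => 1 / (max |(m : ℝ)| 1) ^ r with hF
  have hFpos : ∀ m, 0 < F m := by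
    intro m
    have : (0:ℝ) < max |(m : ℝ)| 1 := lt_of_lt_of_le one_pos (le_max_right _ _)
    positivity
  have hFsum : Summable F := by
    have hbound : ∀ m : ℤ, F m ≤ 2 ^ r * (1 / |(m : ℝ) + 1/2| ^ r) := by
      intro m
      have h1 : |(m : ℝ) + 1/2| ≤ 2 * max |(m : ℝ)| 1 := by
        have := abs_add_le (m : ℝ) (1/2)
        have h2 : |(m : ℝ)| ≤ max |(m : ℝ)| 1 := le_max_left _ _
        have h3 : (1:ℝ) ≤ max |(m : ℝ)| 1 := le_max_right _ _
        have : |(1:ℝ)/2| = 1/2 := by norm_num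
        calc |(m : ℝ) + 1/2| ≤ |(m : ℝ)| + |(1:ℝ)/2| := abs_add_le _ _
          _ ≤ max |(m : ℝ)| 1 + max |(m : ℝ)| 1 := by rw [this]; linarith
          _ = 2 * max |(m : ℝ)| 1 := by ring
      have hmpos : (0:ℝ) < max |(m : ℝ)| 1 := lt_of_lt_of_le one_pos (le_max_right _ _)
      have habs : (0:ℝ) ≤ |(m : ℝ) + 1/2| := abs_nonneg _
      have h2 : |(m : ℝ) + 1/2| ^ r ≤ (2 * max |(m : ℝ)| 1) ^ r :=
        Real.rpow_le_rpow habs h1 (by linarith)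
      have h3 : (2 * max |(m : ℝ)| 1) ^ r = 2 ^ r * (max |(m : ℝ)| 1) ^ r :=
        Real.mul_rpow (by norm_num) hmpos.le
      have hne : ((m : ℝ) + 1/2) ≠ 0 := by
        intro hcontra
        have h5 : ((2 * m + 1 : ℤ) : ℝ) = 0 := by push_cast; linarith
        have h6 : (2 * m + 1 : ℤ) = 0 := by exact_mod_cast h5
        omega
      have habs' : (0:ℝ) < |(m : ℝ) + 1/2| := abs_pos.mpr hne
      have hFm : F m = 1 / (max |(m : ℝ)| 1) ^ r := rfl
      rw [hFm, mul_one_div, div_le_div_iff₀ (by positivity) (by positivity)]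
      have h4 : |(m : ℝ) + 1/2| ^ r ≤ 2 ^ r * (max |(m : ℝ)| 1) ^ r := h2.trans_eq h3
      nlinarith
    apply Summable.of_nonneg_of_le (fun m => (hFpos m).le) hbound
    exact ((Real.summable_one_div_int_add_rpow (1/2) r).mpr hr1).mul_left _
  set K := ∑' m, F m with hK
  have hKpos : 0 < K := hFsum.tsum_pos (fun m => (hFpos m).le) 0 (hFpos 0)
  refine ⟨24 * K, by positivity, ?_⟩
  intro A ζ nA nζ hA hζ s
  -- nonnegativity of nA, nζ
  have hnA : 0 ≤ nA := by
    have h := hA 0 0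
    have h1 : (0:ℝ) ≤ (1 + |(|((0:ℤ) : ℝ)| - |((0:ℤ) : ℝ)|)|) * (max |((0:ℤ) : ℝ)| 1) ^ β *
        (max |((0:ℤ) : ℝ)| 1) ^ β * mnorm (A 0 0) := by
      have := mnorm_nonneg (A 0 0)
      have h2 : (0:ℝ) < (1 + |(|((0:ℤ) : ℝ)| - |((0:ℤ) : ℝ)|)|) * (max |((0:ℤ) : ℝ)| 1) ^ β *
          (max |((0:ℤ) : ℝ)| 1) ^ β := by positivity
      positivity
    linarith
  have hnζ : 0 ≤ nζ := by
    have h := hζ 0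
    have h1 : (0:ℝ) ≤ vnorm (ζ 0) * (max |((0:ℤ) : ℝ)| 1) ^ (β + 1) := by
      have := vnorm_nonneg (ζ 0)
      positivity
    linarith
  set a : ℝ := max |(s : ℝ)| 1 with haa
  have ha1 : (1:ℝ) ≤ a := le_max_right _ _
  have hapos : (0:ℝ) < a := lt_of_lt_of_le one_pos ha1
  set t : ℤ := |s| with ht
  -- the majorant
  set g : ℤ → ℝ := fun k => 2 * nA * nζ * (2 * F k + 2 * F (t - |k|)) with hg
  -- shifted sums
  have hsum1 : Summable (fun k : ℤ => F (t - k)) := by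
    have := (Equiv.subLeft t).summable_iff (f := F)
    exact this.mpr hFsum
  have hsum2 : Summable (fun k : ℤ => F (t + k)) := by
    have := (Equiv.addLeft t).summable_iff (f := F)
    exact this.mpr hFsum
  have htsum1 : ∑' k : ℤ, F (t - k) = K := (Equiv.subLeft t).tsum_eq F
  have htsum2 : ∑' k : ℤ, F (t + k) = K := (Equiv.addLeft t).tsum_eq F
  have habsle : ∀ k : ℤ, F (t - |k|) ≤ F (t - k) + F (t + k) := by
    intro k
    rcases abs_choice k with h | h
    · rw [h]; linarith [(hFpos (t + k)).le]
    · rw [h, sub_neg_eq_add]; linarith [(hFpos (t - k)).le]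
  have hsumabs : Summable (fun k : ℤ => F (t - |k|)) :=
    Summable.of_nonneg_of_le (fun k => (hFpos _).le) habsle (hsum1.add hsum2)
  have htsumabs : ∑' k : ℤ, F (t - |k|) ≤ 2 * K := by
    calc ∑' k : ℤ, F (t - |k|) ≤ ∑' k : ℤ, (F (t - k) + F (t + k)) :=
          Summable.tsum_le_tsum habsle hsumabs (hsum1.add hsum2)
      _ = K + K := by rw [Summable.tsum_add hsum1 hsum2, htsum1, htsum2]
      _ = 2 * K := by ring
  have hgsum : Summable g := by
    apply Summable.mul_left
    exact (hFsum.mul_left 2).add (hsumabs.mul_left 2)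
  have hgtsum : ∑' k, g k ≤ 12 * K * nA * nζ := by
    have h1 : ∑' k, g k = 2 * nA * nζ * (2 * K + 2 * ∑' k : ℤ, F (t - |k|)) := by
      rw [hg, tsum_mul_left, Summable.tsum_add (hFsum.mul_left 2) (hsumabs.mul_left 2),
        tsum_mul_left, tsum_mul_left, ← hK]
    rw [h1]
    have h2 : 2 * K + 2 * ∑' k : ℤ, F (t - |k|) ≤ 2 * K + 2 * (2 * K) := by linarith
    calc 2 * nA * nζ * (2 * K + 2 * ∑' k : ℤ, F (t - |k|))
        ≤ 2 * nA * nζ * (2 * K + 2 * (2 * K)) := by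
          apply mul_le_mul_of_nonneg_left h2 (by positivity)
      _ = 12 * K * nA * nζ := by ring
  -- per-term bound
  have hterm : ∀ k : ℤ, vnorm ((A s k).mulVec (ζ k)) * a ^ (β + 1) ≤ g k := by
    intro k
    set c : ℝ := max |(k : ℝ)| 1 with hcc
    have hc1 : (1:ℝ) ≤ c := le_max_right _ _
    have hcpos : (0:ℝ) < c := lt_of_lt_of_le one_pos hc1
    set d : ℝ := |(|(s : ℝ)| - |(k : ℝ)|)| with hdd
    have hd0 : (0:ℝ) ≤ d := abs_nonneg _
    have hDpos : (0:ℝ) < 1 + d := by linarith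
    have haβ : (0:ℝ) < a ^ β := Real.rpow_pos_of_pos hapos β
    have hcβ : (0:ℝ) < c ^ β := Real.rpow_pos_of_pos hcpos β
    have hcβ1 : (0:ℝ) < c ^ (β + 1) := Real.rpow_pos_of_pos hcpos _
    have hm : mnorm (A s k) ≤ nA / ((1 + d) * a ^ β * c ^ β) := by
      rw [le_div_iff₀ (by positivity)]
      have := hA s k
      calc mnorm (A s k) * ((1 + d) * a ^ β * c ^ β)
          = (1 + d) * a ^ β * c ^ β * mnorm (A s k) := by ring
        _ ≤ nA := this
    have hvz : vnorm (ζ k) ≤ nζ / c ^ (β + 1) := by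
      rw [le_div_iff₀ hcβ1]
      exact hζ k
    have h1 : vnorm ((A s k).mulVec (ζ k)) ≤
        2 * (nA / ((1 + d) * a ^ β * c ^ β)) * (nζ / c ^ (β + 1)) := by
      calc vnorm ((A s k).mulVec (ζ k)) ≤ 2 * mnorm (A s k) * vnorm (ζ k) :=
            vnorm_mulVec_le _ _
        _ ≤ 2 * (nA / ((1 + d) * a ^ β * c ^ β)) * (nζ / c ^ (β + 1)) := by
            apply mul_le_mul
            · apply mul_le_mul_of_nonneg_left hm (by norm_num)
            · exact hvz
            · exact vnorm_nonneg _
            · positivity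
    have haβ1 : (0:ℝ) ≤ a ^ (β + 1) := (Real.rpow_pos_of_pos hapos _).le
    have h2 : vnorm ((A s k).mulVec (ζ k)) * a ^ (β + 1) ≤
        2 * (nA / ((1 + d) * a ^ β * c ^ β)) * (nζ / c ^ (β + 1)) * a ^ (β + 1) :=
      mul_le_mul_of_nonneg_right h1 haβ1
    -- algebra: rewrite RHS as 2 nA nζ * (a / ((1+d) c^r))
    have hasplit : a ^ (β + 1) = a ^ β * a := by
      rw [Real.rpow_add hapos, Real.rpow_one]
    have hcsplit : c ^ β * c ^ (β + 1) = c ^ r := by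
      rw [← Real.rpow_add hcpos, hr]; ring_nf
    have hcr : (0:ℝ) < c ^ r := Real.rpow_pos_of_pos hcpos r
    have h3 : 2 * (nA / ((1 + d) * a ^ β * c ^ β)) * (nζ / c ^ (β + 1)) * a ^ (β + 1)
        = 2 * nA * nζ * (a / ((1 + d) * c ^ r)) := by
      rw [hasplit, ← hcsplit]
      field_simp
    rw [h3] at h2
    -- the key inequality
    have hacd : a ≤ c + d := by
      have h1 : |(s : ℝ)| ≤ |(k : ℝ)| + d := by
        have := le_abs_self (|(s : ℝ)| - |(k : ℝ)|)
        rw [hdd]; linarith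
      have h2 : |(k : ℝ)| ≤ c := le_max_left _ _
      apply max_le
      · linarith
      · linarith
    have hkey := key_ineq β hβ a c d ha1 hc1 hd0 hacd
    -- identify F values
    have hFk : F k = 1 / c ^ r := by rw [hF]
    have hFtk : F (t - |k|) = 1 / (max d 1) ^ r := by
      have hcast : ((t - |k| : ℤ) : ℝ) = |(s : ℝ)| - |(k : ℝ)| := by
        push_cast [ht]
        simp [Int.cast_abs]
      rw [hF]
      simp only [hcast, ← hdd]
    have h4 : a / ((1 + d) * c ^ r) ≤ 2 * F k + 2 * F (t - |k|) := by
      rw [hFk, hFtk]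
      calc a / ((1 + d) * c ^ r) ≤ 2 / c ^ r + 2 / (max d 1) ^ r := hkey
        _ = 2 * (1 / c ^ r) + 2 * (1 / (max d 1) ^ r) := by ring
    calc vnorm ((A s k).mulVec (ζ k)) * a ^ (β + 1)
        ≤ 2 * nA * nζ * (a / ((1 + d) * c ^ r)) := h2
      _ ≤ 2 * nA * nζ * (2 * F k + 2 * F (t - |k|)) := by
          apply mul_le_mul_of_nonneg_left h4 (by positivity)
      _ = g k := rfl
  -- assemble
  have haβ1 : (1:ℝ) ≤ a ^ (β + 1) := by
    have := Real.rpow_le_rpow_of_exponent_le ha1 (show (0:ℝ) ≤ β + 1 by linarith)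
    rwa [Real.rpow_zero] at this
  have haβ1nn : (0:ℝ) ≤ a ^ (β + 1) := by linarith
  have hle : ∀ k : ℤ, vnorm ((A s k).mulVec (ζ k)) ≤ g k := by
    intro k
    have h1 : vnorm ((A s k).mulVec (ζ k)) ≤ vnorm ((A s k).mulVec (ζ k)) * a ^ (β + 1) := by
      nlinarith [vnorm_nonneg ((A s k).mulVec (ζ k))]
    exact h1.trans (hterm k)
  have hvs : Summable (fun k : ℤ => vnorm ((A s k).mulVec (ζ k))) :=
    Summable.of_nonneg_of_le (fun k => vnorm_nonneg _) hle hgsum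
  have hcompabs : ∀ i : Fin 2, Summable (fun k : ℤ => ‖(A s k).mulVec (ζ k) i‖) :=
    fun i => Summable.of_nonneg_of_le (fun k => norm_nonneg _)
      (fun k => abs_le_vnorm _ i) hvs
  have hsummv : Summable (fun k : ℤ => (A s k).mulVec (ζ k)) := by
    rw [Pi.summable]
    intro i
    apply Summable.of_norm
    simpa using hcompabs i
  refine ⟨hsummv, ?_⟩
  set V := ∑' k : ℤ, vnorm ((A s k).mulVec (ζ k)) with hV
  have hVnn : 0 ≤ V := tsum_nonneg (fun k => vnorm_nonneg _)
  have hTi : ∀ i : Fin 2, ‖(∑' k : ℤ, (A s k).mulVec (ζ k)) i‖ ≤ V := by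
    intro i
    rw [tsum_apply hsummv]
    calc ‖∑' k : ℤ, (A s k).mulVec (ζ k) i‖
        = ‖∑' k : ℤ, (A s k).mulVec (ζ k) i‖ := rfl
      _ ≤ ∑' k : ℤ, ‖(A s k).mulVec (ζ k) i‖ :=
          norm_tsum_le_tsum_norm (by simpa using hcompabs i)
      _ = ∑' k : ℤ, ‖(A s k).mulVec (ζ k) i‖ := by
          rfl
      _ ≤ V := Summable.tsum_le_tsum (fun k => abs_le_vnorm _ i) (by simpa using hcompabs i) hvs
  have hvT : vnorm (∑' k : ℤ, (A s k).mulVec (ζ k)) ≤ 2 * V := by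
    have h0 := hTi 0
    have h1 := hTi 1
    have a0 := norm_nonneg ((∑' k : ℤ, (A s k).mulVec (ζ k)) 0)
    have a1 := norm_nonneg ((∑' k : ℤ, (A s k).mulVec (ζ k)) 1)
    calc vnorm (∑' k : ℤ, (A s k).mulVec (ζ k)) ≤ Real.sqrt ((2 * V) ^ 2) := by
          apply Real.sqrt_le_sqrt
          nlinarith
      _ = 2 * V := Real.sqrt_sq (by positivity)
  calc vnorm (∑' k : ℤ, (A s k).mulVec (ζ k)) * a ^ (β + 1)
      ≤ 2 * V * a ^ (β + 1) := mul_le_mul_of_nonneg_right hvT haβ1nn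
    _ = 2 * ∑' k : ℤ, (vnorm ((A s k).mulVec (ζ k)) * a ^ (β + 1)) := by
        rw [tsum_mul_right]; ring
    _ ≤ 2 * ∑' k, g k := by
        have := Summable.tsum_le_tsum hterm (hvs.mul_right _) hgsum
        linarith
    _ ≤ 2 * (12 * K * nA * nζ) := by linarith
    _ = 24 * K * nA * nζ := by ring
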